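/- If B is a boundary for a real Banach space X (i.e., B ⊆ S_{X*} and every x ∈ X attains its norm at some b ∈ B), then for every bounded sequence (x_n) in X, sup_{x* ∈ B} limsup_n x*(x_n) = sup_{x* ∈ B_{X*}} limsup_n x*(x_n). -/

import Mathlib

set_option linter.unusedSectionVars false

noncomputable section
open Filter Topology Set NormedSpace Pointwise

variable {X : Type*} [NormedAddCommGroup X] [NormedSpace ℝ X] [CompleteSpace X]

/-- `B` is a boundary for `X`: a subset of the dual unit sphere on which every
element of `X` attains its norm. -/
def IsBoundary (B : Set (StrongDual ℝ X)) : Prop :=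
  (∀ f ∈ B, ‖f‖ = 1) ∧ ∀ x : X, ∃ f ∈ B, f x = ‖x‖

/-- The closure of `S` in the topology `σ_B` of pointwise convergence on `B`. -/
def sigmaClosure (B : Set (StrongDual ℝ X)) (S : Set X) : Set X :=
  {x | ∀ ε > (0 : ℝ), ∀ F : Finset (StrongDual ℝ X), (F : Set (StrongDual ℝ X)) ⊆ B →
    ∃ y ∈ S, ∀ f ∈ F, |f x - f y| < ε}

/-- Countable convex combinations of `{y j : j ≥ k}`. -/
def convCombo (y : ℕ → X) (k : ℕ) : Set X :=
  {u | ∃ l : ℕ → ℝ, (∀ j, 0 ≤ l j) ∧ (∀ j, j < k → l j = 0) ∧ HasSum l 1 ∧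
    HasSum (fun j => l j • y j) u}

lemma self_mem_convCombo (y : ℕ → X) (k : ℕ) : y k ∈ convCombo y k := by
  refine ⟨fun j => if j = k then 1 else 0, ?_, ?_, hasSum_ite_eq k 1, ?_⟩
  · intro j; dsimp only; split <;> norm_num
  · intro j hj; simp [Nat.ne_of_lt hj]
  · have : (fun j => (if j = k then (1:ℝ) else 0) • y j) =
        fun j => if j = k then y k else 0 := by
      funext j
      by_cases h : j = k
      · subst h; simp
      · simp [h]
    rw [this]
    exact hasSum_ite_eq k (y k)

lemma convCombo_anti (y : ℕ → X) {k m : ℕ} (h : m ≤ k) :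
    convCombo y k ⊆ convCombo y m := by
  rintro u ⟨l, h0, hk, h1, h2⟩
  exact ⟨l, h0, fun j hj => hk j (lt_of_lt_of_le hj h), h1, h2⟩

lemma convCombo_norm_le {y : ℕ → X} {C : ℝ} (hy : ∀ j, ‖y j‖ ≤ C) {k : ℕ} {u : X}
    (hu : u ∈ convCombo y k) : ‖u‖ ≤ C := by
  obtain ⟨l, h0, -, h1, h2⟩ := hu
  have hC : (0:ℝ) ≤ C := le_trans (norm_nonneg (y 0)) (hy 0)
  have hnorm : ∀ j, ‖l j • y j‖ ≤ l j * C := by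
    intro j
    rw [norm_smul, Real.norm_eq_abs, abs_of_nonneg (h0 j)]
    exact mul_le_mul_of_nonneg_left (hy j) (h0 j)
  have hsn : Summable fun j => ‖l j • y j‖ :=
    Summable.of_nonneg_of_le (fun j => norm_nonneg _) hnorm ((h1.summable).mul_right C)
  calc ‖u‖ = ‖∑' j, l j • y j‖ := by rw [h2.tsum_eq]
    _ ≤ ∑' j, ‖l j • y j‖ := norm_tsum_le_tsum_norm hsn
    _ ≤ ∑' j, l j * C := Summable.tsum_le_tsum hnorm hsn ((h1.summable).mul_right C)
    _ = 1 * C := (h1.mul_right C).tsum_eq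
    _ = C := one_mul C

lemma convCombo_eval_le {y : ℕ → X} {k : ℕ} {u : X} (hu : u ∈ convCombo y k)
    (f : StrongDual ℝ X) {s : ℝ} (hs : ∀ j, k ≤ j → f (y j) ≤ s) : f u ≤ s := by
  obtain ⟨l, h0, hk, h1, h2⟩ := hu
  have hf : HasSum (fun j => l j * f (y j)) (f u) := by
    have := f.hasSum h2
    simpa using this
  have : f u ≤ 1 * s := by
    refine hasSum_le (fun j => ?_) hf (h1.mul_right s)
    rcases lt_or_ge j k with hj | hj
    · simp [hk j hj]
    · exact mul_le_mul_of_nonneg_left (hs j hj) (h0 j)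
  simpa using this

lemma convCombo_le_eval {y : ℕ → X} {k : ℕ} {u : X} (hu : u ∈ convCombo y k)
    (f : StrongDual ℝ X) {s : ℝ} (hs : ∀ j, k ≤ j → s ≤ f (y j)) : s ≤ f u := by
  have := convCombo_eval_le hu (-f) (s := -s) (fun j hj => by
    simpa using neg_le_neg (hs j hj))
  simpa using this

set_option maxHeartbeats 1000000 in
lemma convCombo_tsum_mem {y : ℕ → X} {C : ℝ} (hy : ∀ j, ‖y j‖ ≤ C) (k : ℕ)
    {v : ℕ → X} (hv : ∀ i, v i ∈ convCombo y k) {c : ℕ → ℝ}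
    (hc0 : ∀ i, 0 ≤ c i) (hc : HasSum c 1) :
    ∃ u : X, HasSum (fun i => c i • v i) u ∧ u ∈ convCombo y k := by
  have hC : (0:ℝ) ≤ C := le_trans (norm_nonneg (y 0)) (hy 0)
  choose l hl0 hlk hl1 hlv using hv
  set F : ℕ × ℕ → ℝ := fun p => c p.1 * l p.1 p.2 with hF
  have hF0 : ∀ p, 0 ≤ F p := fun p => mul_nonneg (hc0 _) (hl0 _ _)
  have hrows : ∀ i, HasSum (fun j => F (i, j)) (c i) := by
    intro i
    simpa using (hl1 i).mul_left (c i)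
  have hFsum : Summable F := by
    refine (summable_prod_of_nonneg hF0).2 ⟨fun i => (hrows i).summable, ?_⟩
    have : (fun i => ∑' j, F (i, j)) = c := by
      funext i; exact (hrows i).tsum_eq
    rw [this]; exact hc.summable
  have hF1 : HasSum F 1 := by
    have h1 : HasSum c (∑' p, F p) := hFsum.hasSum.prod_fiberwise hrows
    have h2 := hFsum.hasSum
    rwa [h1.unique hc] at h2
  -- columns
  have hcolS : ∀ j, Summable fun i => F (i, j) := fun j =>
    hFsum.comp_injective (fun a b h => by simpa using congrArg Prod.fst h :
      Function.Injective fun i : ℕ => ((i, j) : ℕ × ℕ))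
  set m : ℕ → ℝ := fun j => ∑' i, F (i, j) with hm
  have hcols : ∀ j, HasSum (fun i => F (i, j)) (m j) := fun j => (hcolS j).hasSum
  have hF1' : HasSum (fun p : ℕ × ℕ => F (p.2, p.1)) 1 := (Equiv.prodComm ℕ ℕ).hasSum_iff.2 hF1
  have hm1 : HasSum m 1 := hF1'.prod_fiberwise hcols
  -- the vector-valued double family
  set G : ℕ × ℕ → X := fun p => F p • y p.2 with hG
  have hGsum : Summable G := by
    refine Summable.of_norm_bounded (hFsum.mul_right C) (fun p => ?_)
    rw [norm_smul, Real.norm_eq_abs, abs_of_nonneg (hF0 p)]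
    exact mul_le_mul_of_nonneg_left (hy _) (hF0 p)
  set S : X := ∑' p, G p with hS
  have hGrows : ∀ i, HasSum (fun j => G (i, j)) (c i • v i) := by
    intro i
    have h := (hlv i).const_smul (c i)
    convert h using 1
    funext j
    simp [hG, hF, mul_smul]
  have hSum1 : HasSum (fun i => c i • v i) S := hGsum.hasSum.prod_fiberwise hGrows
  have hGcols : ∀ j, HasSum (fun i => G (i, j)) (m j • y j) := fun j =>
    (hcols j).smul_const (y j)
  have hG' : HasSum (fun p : ℕ × ℕ => G (p.2, p.1)) S := (Equiv.prodComm ℕ ℕ).hasSum_iff.2 hGsum.hasSum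
  have hSum2 : HasSum (fun j => m j • y j) S := hG'.prod_fiberwise hGcols
  exact ⟨S, hSum1, m, fun j => tsum_nonneg (fun i => hF0 _),
    fun j hj => by simp only [hm]; simp [hF, hlk _ j hj],
    hm1, hSum2⟩

lemma simons_lemma {y : ℕ → X} {C : ℝ} (hy : ∀ j, ‖y j‖ ≤ C)
    {B : Set (StrongDual ℝ X)} (hB1 : ∀ f ∈ B, ‖f‖ = 1) (hB2 : ∀ z : X, ∃ f ∈ B, f z = ‖z‖)
    {t : ℝ} (ht : ∀ u ∈ convCombo y 0, t ≤ ‖u‖) {ε : ℝ} (hε : 0 < ε) :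
    ∃ b ∈ B, t - ε ≤ limsup (fun j => b (y j)) atTop := by
  set β : ℕ → ℝ := fun k => (2⁻¹ : ℝ) ^ k with hβ
  have hβpos : ∀ k, 0 < β k := fun k => pow_pos (by norm_num) k
  have hβsucc : ∀ k, β (k+1) = β k * 2⁻¹ := fun k => pow_succ _ _
  -- the near-infimum choice
  have hpick : ∀ (k : ℕ) (h : X), ∃ v, v ∈ convCombo y (k+1) ∧
      ‖h + β k • v‖ < sInf ((fun z => ‖h + β k • z‖) '' convCombo y (k+1))
        + ε * (4⁻¹ : ℝ) ^ (k+1) := by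
    intro k h
    have hne : ((fun z => ‖h + β k • z‖) '' convCombo y (k+1)).Nonempty :=
      ⟨_, ⟨y (k+1), self_mem_convCombo y (k+1), rfl⟩⟩
    have hpos : 0 < ε * (4⁻¹ : ℝ) ^ (k+1) := mul_pos hε (pow_pos (by norm_num) _)
    obtain ⟨a, ⟨v, hv, rfl⟩, ha⟩ := Real.lt_sInf_add_pos hne hpos
    exact ⟨v, hv, ha⟩
  choose pick hpick1 hpick2 using hpick
  let H : ℕ → X := fun k => Nat.rec (motive := fun _ => X) 0
    (fun n ih => ih + β (n+1) • pick n ih) k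
  have Hs : ∀ k, H (k+1) = H k + β (k+1) • pick k (H k) := fun k => rfl
  set v : ℕ → X := fun k => pick k (H k) with hvdef
  have hvmem : ∀ k, v k ∈ convCombo y (k+1) := fun k => hpick1 k (H k)
  -- geometric weights sum to one
  have hcgeo : HasSum (fun i : ℕ => β (i+1)) 1 := by
    have h := hasSum_geometric_two.mul_left (2⁻¹ : ℝ)
    have heq : (fun i : ℕ => β (i+1)) = fun i => (2⁻¹ : ℝ) * (1/2 : ℝ) ^ i := by
      funext i
      show (2⁻¹ : ℝ) ^ (i+1) = 2⁻¹ * (1/2 : ℝ) ^ i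
      rw [pow_succ, one_div, mul_comm]
    rw [heq]
    have h2 : (2⁻¹ : ℝ) * 2 = 1 := by norm_num
    rw [h2] at h
    exact h
  -- the tails u k
  have hu : ∀ k, ∃ u, HasSum (fun i => β (i+1) • v (k+i)) u ∧ u ∈ convCombo y (k+1) := by
    intro k
    exact convCombo_tsum_mem hy (k+1)
      (fun i => convCombo_anti y (by omega) (hvmem (k+i)))
      (fun i => (hβpos _).le) hcgeo
  choose u huS humem using hu
  -- u k = 1/2 v k + 1/2 u (k+1)
  have I2 : ∀ k, u k = (2⁻¹ : ℝ) • v k + (2⁻¹ : ℝ) • u (k+1) := by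
    intro k
    have h2 : (fun i : ℕ => β (i+1+1) • v (k+(i+1)))
        = fun i => (2⁻¹ : ℝ) • (β (i+1) • v (k+1+i)) := by
      funext i
      rw [show k+(i+1) = k+1+i from by omega, ← mul_smul]
      congr 1
      rw [hβsucc]; ring
    have h3 : HasSum (fun i => (2⁻¹ : ℝ) • (β (i+1) • v (k+1+i))) ((2⁻¹ : ℝ) • u (k+1)) :=
      (huS (k+1)).const_smul _
    rw [← h2] at h3
    have h5 := (hasSum_nat_add_iff (f := fun i => β (i+1) • v (k+i)) 1).1 h3
    have h6 : ((2⁻¹ : ℝ) • u (k+1) + ∑ i ∈ Finset.range 1, β (i+1) • v (k+i))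
        = (2⁻¹ : ℝ) • v k + (2⁻¹ : ℝ) • u (k+1) := by
      simp [hβ]
      rw [add_comm]
    rw [h6] at h5
    exact (huS k).unique h5
  -- w = H k + β k • u k  for all k
  set w : X := u 0 with hwdef
  have hw : ∀ k, w = H k + β k • u k := by
    intro k
    induction k with
    | zero =>
      have h0 : H 0 = 0 := rfl
      have hb0 : β 0 = 1 := pow_zero _
      rw [h0, hb0, one_smul, zero_add]
    | succ k ih =>
      rw [ih, Hs k, I2 k]
      rw [smul_add, add_assoc, ← mul_smul, ← mul_smul, ← hβsucc k]
  obtain ⟨b, hbB, hbw⟩ := hB2 w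
  have hb1 : ‖b‖ = 1 := hB1 b hbB
  have hble : ∀ z : X, b z ≤ ‖z‖ := by
    intro z
    refine le_trans (le_abs_self _) ?_
    rw [← Real.norm_eq_abs]
    calc ‖b z‖ ≤ ‖b‖ * ‖z‖ := b.le_opNorm z
      _ = ‖z‖ := by rw [hb1, one_mul]
  have hinf_le : ∀ k, sInf ((fun z => ‖H k + β k • z‖) '' convCombo y (k+1)) ≤ ‖w‖ := by
    intro k
    refine csInf_le ⟨0, ?_⟩ ⟨u k, humem k, ?_⟩
    swap
    · show ‖H k + β k • u k‖ = ‖w‖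
      rw [← hw k]
    rintro r ⟨z, hz, rfl⟩; exact norm_nonneg _
  -- K1
  have K1 : ∀ k, b (v k) < b (u k) + ε * β k / 4 := by
    intro k
    have h1 : b (H k) + β k * b (v k) ≤ ‖H k + β k • v k‖ := by
      have := hble (H k + β k • v k)
      simpa [map_add, map_smul, smul_eq_mul] using this
    have h2 := hpick2 k (H k)
    have h3 := hinf_le k
    have h4 : b w = b (H k) + β k * b (u k) := by
      rw [hw k]; simp [map_add, map_smul, smul_eq_mul]
    have h7 : (4⁻¹ : ℝ) ^ (k+1) = β k * β k * 4⁻¹ := by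
      show (4⁻¹ : ℝ) ^ (k+1) = (2⁻¹:ℝ)^k * (2⁻¹:ℝ)^k * 4⁻¹
      rw [pow_succ, ← mul_pow]
      norm_num
    have h6 : β k * b (v k) < β k * (b (u k) + ε * β k / 4) := by
      rw [h7] at h2
      nlinarith [h1, h2, h3, h4, hbw]
    exact (mul_lt_mul_iff_right₀ (hβpos k)).1 h6
  -- K2
  have K2 : ∀ k, b (u k) = 2⁻¹ * b (v k) + 2⁻¹ * b (u (k+1)) := by
    intro k
    rw [I2 k]; simp [map_add, map_smul, smul_eq_mul]
  -- K3
  have K3 : ∀ k, b w - ε/2 * (1 - β k) ≤ b (u k) := by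
    intro k
    induction k with
    | zero => simp [hβ, hwdef]
    | succ k ih =>
      have h1 := K1 k
      have h2 := K2 k
      have h3 := hβsucc k
      nlinarith [hβpos k]
  have K3' : ∀ k, b w - ε/2 ≤ b (u k) := by
    intro k
    have := K3 k
    nlinarith [hβpos k, hε]
  have hwt : t ≤ b w := by
    rw [hbw]
    exact ht w (convCombo_anti y (Nat.zero_le 1) (humem 0))
  have hAub : ∀ k, b (u k) ≤ C := fun k =>
    le_trans (hble _) (convCombo_norm_le hy (humem k))
  -- frequently t - ε/2 ≤ b (v k)
  have hfreq : ∀ K : ℕ, ∃ k, K ≤ k ∧ t - ε/2 ≤ b (v k) := by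
    intro K
    by_contra hcon
    push_neg at hcon
    have hc0 : ∀ k, 0 ≤ b (u k) - (t - ε/2) := by
      intro k; have := K3' k; linarith [hwt]
    have hgrow : ∀ k, K ≤ k → 2 * (b (u k) - (t - ε/2)) < b (u (k+1)) - (t - ε/2) := by
      intro k hk
      have h2 := K2 k
      have h3 := hcon k hk
      linarith
    have hKpos : 0 < b (u (K+1)) - (t - ε/2) :=
      lt_of_le_of_lt (by linarith [hc0 K]) (hgrow K le_rfl)
    have hind : ∀ n : ℕ, ((n:ℝ)+1) * (b (u (K+1)) - (t - ε/2)) ≤ b (u (K+1+n)) - (t - ε/2) := by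
      intro n
      induction n with
      | zero => simp
      | succ n ih =>
        have hg := hgrow (K+1+n) (by omega)
        have he : K+1+(n+1) = (K+1+n)+1 := by omega
        rw [he]
        push_cast
        push_cast at ih
        nlinarith [hKpos, hc0 (K+1+n)]
    obtain ⟨n, hn⟩ := exists_nat_gt ((C - (t - ε/2)) / (b (u (K+1)) - (t - ε/2)))
    have h1 := hind n
    have h2 := hAub (K+1+n)
    have h3 : (C - (t - ε/2)) < (n:ℝ) * (b (u (K+1)) - (t - ε/2)) := (div_lt_iff₀ hKpos).1 hn
    nlinarith [hKpos]
  have hfreq2 : ∃ᶠ j in atTop, t - ε ≤ b (y j) := by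
    rw [frequently_atTop]
    intro K
    by_contra hcon
    push_neg at hcon
    obtain ⟨k, hk, hbk⟩ := hfreq K
    have : b (v k) ≤ t - ε :=
      convCombo_eval_le (hvmem k) b (fun j hj => le_of_lt (hcon j (by omega)))
    linarith
  refine ⟨b, hbB, le_limsup_of_frequently_le hfreq2 ?_⟩
  exact isBoundedUnder_of ⟨C, fun j => le_trans (hble _) (hy j)⟩


theorem simons_equality (B : Set (StrongDual ℝ X)) (hB : IsBoundary B)
    (x : ℕ → X) (C : ℝ) (hx : ∀ n, ‖x n‖ ≤ C) :
    sSup {r : ℝ | ∃ f ∈ B, r = limsup (fun n => f (x n)) atTop} =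
      sSup {r : ℝ | ∃ f : StrongDual ℝ X, ‖f‖ ≤ 1 ∧ r = limsup (fun n => f (x n)) atTop} := by
  obtain ⟨hB1, hB2⟩ := hB
  have hC : (0:ℝ) ≤ C := le_trans (norm_nonneg _) (hx 0)
  set S1 := {r : ℝ | ∃ f ∈ B, r = limsup (fun n => f (x n)) atTop} with hS1
  set S2 := {r : ℝ | ∃ f : StrongDual ℝ X, ‖f‖ ≤ 1 ∧ r = limsup (fun n => f (x n)) atTop} with hS2
  have hbound : ∀ (f : StrongDual ℝ X), ‖f‖ ≤ 1 → ∀ n, |f (x n)| ≤ C := by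
    intro f hf n
    calc |f (x n)| = ‖f (x n)‖ := (Real.norm_eq_abs _).symm
      _ ≤ ‖f‖ * ‖x n‖ := f.le_opNorm _
      _ ≤ 1 * C := mul_le_mul hf (hx n) (norm_nonneg _) zero_le_one
      _ = C := one_mul C
  have hub : ∀ r ∈ S2, r ≤ C := by
    rintro r ⟨f, hf, rfl⟩
    refine limsup_le_of_le (isCoboundedUnder_le_of_le atTop (x := -C) ?_)
      (Eventually.of_forall ?_)
    · intro n; exact neg_le_of_abs_le (hbound f hf n)
    · intro n; exact (abs_le.1 (hbound f hf n)).2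
  have hsub : S1 ⊆ S2 := by
    rintro r ⟨f, hfB, rfl⟩
    exact ⟨f, le_of_eq (hB1 f hfB), rfl⟩
  have hne1 : S1.Nonempty := by
    obtain ⟨f, hf, -⟩ := hB2 0
    exact ⟨_, f, hf, rfl⟩
  have hbdd2 : BddAbove S2 := ⟨C, hub⟩
  have hbdd1 : BddAbove S1 := ⟨C, fun r hr => hub r (hsub hr)⟩
  refine le_antisymm (csSup_le_csSup hbdd2 hne1 hsub) ?_
  refine csSup_le (hne1.mono hsub) ?_
  rintro r ⟨f, hf1, rfl⟩
  by_contra hlt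
  push_neg at hlt
  set L := limsup (fun n => f (x n)) atTop with hL
  set s := sSup S1 with hs
  set t := (s + L)/2 with htdef
  set ε := (L - s)/4 with hεdef
  have hεpos : 0 < ε := by rw [hεdef]; linarith
  have htlt : t < L := by rw [htdef]; linarith
  have hfreq : ∃ᶠ n in atTop, t < f (x n) :=
    frequently_lt_of_lt_limsup
      (isCoboundedUnder_le_of_le atTop (x := -C)
        (fun n => neg_le_of_abs_le (hbound f hf1 n))) htlt
  obtain ⟨φ, hφ, hφt⟩ := extraction_of_frequently_atTop hfreq
  set y : ℕ → X := fun j => x (φ j) with hy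
  have hycomb : ∀ u ∈ convCombo y 0, t ≤ ‖u‖ := by
    intro u hu
    have h1 : t ≤ f u := convCombo_le_eval hu f (fun j _ => (hφt j).le)
    calc t ≤ f u := h1
      _ ≤ |f u| := le_abs_self _
      _ = ‖f u‖ := (Real.norm_eq_abs _).symm
      _ ≤ ‖f‖ * ‖u‖ := f.le_opNorm u
      _ ≤ 1 * ‖u‖ := mul_le_mul_of_nonneg_right hf1 (norm_nonneg _)
      _ = ‖u‖ := one_mul _
  obtain ⟨b, hbB, hbl⟩ :=
    simons_lemma (fun j => hx (φ j)) hB1 hB2 hycomb hεpos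
  have hb1 : ‖b‖ ≤ 1 := le_of_eq (hB1 b hbB)
  have hmono : limsup (fun j => b (y j)) atTop ≤ limsup (fun n => b (x n)) atTop := by
    have hmap : map φ atTop ≤ atTop := hφ.tendsto_atTop
    have he : limsup (fun j => b (y j)) atTop = limsup (fun n => b (x n)) (map φ atTop) := by
      rw [Filter.limsup, Filter.limsup, Filter.map_map]
      rfl
    rw [he]
    refine limsup_le_limsup_of_le hmap ?_ ?_
    · exact isCoboundedUnder_le_of_le _ (x := -C)
        (fun n => neg_le_of_abs_le (hbound b hb1 n))
    · exact isBoundedUnder_of ⟨C, fun n => (abs_le.1 (hbound b hb1 n)).2⟩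
  have hmem : limsup (fun n => b (x n)) atTop ∈ S1 := ⟨b, hbB, rfl⟩
  have hfin : t - ε ≤ s := le_trans (le_trans hbl hmono) (le_csSup hbdd1 hmem)
  rw [htdef, hεdef] at hfin
  linarith
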